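/- For every a ∈ [0, π/2] one has 1 − cos(a/2) ≤ (1 − 1/√2) sin a, and a(a/2 − sin(a/2)) ≤ (π/2)(π/4 − 1/√2) sin a. -/

import Mathlib

open Real Set

private lemma concave_nonneg {b : ℝ} (hb : 0 < b) {f : ℝ → ℝ}
    (hf : ConcaveOn ℝ (Set.Icc 0 b) f) (h0 : f 0 = 0) (hb' : f b = 0) :
    ∀ a ∈ Set.Icc 0 b, 0 ≤ f a := by
  intro a ha
  obtain ⟨ha0, hab⟩ := ha
  have h1 : (0:ℝ) ≤ 1 - a / b := by
    have : a / b ≤ 1 := (div_le_one hb).2 hab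
    linarith
  have h2 : (0:ℝ) ≤ a / b := div_nonneg ha0 hb.le
  have key := hf.2 (Set.left_mem_Icc.2 hb.le) (Set.right_mem_Icc.2 hb.le) h1 h2
    (by ring)
  have hco : (1 - a / b) • (0:ℝ) + (a / b) • b = a := by
    field_simp
    simp only [smul_eq_mul, mul_zero, zero_add]
    exact div_mul_cancel₀ a hb.ne'
  rw [hco, h0, hb'] at key
  simpa using key

private lemma deriv2_aux (c : ℝ) (f g h : ℝ → ℝ)
    (hfg : ∀ x, HasDerivAt f (g x) x) (hgh : ∀ x, HasDerivAt g (h x) x)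
    (hD : Convex ℝ (Set.Icc (0:ℝ) c))
    (hnp : ∀ x ∈ Set.Icc (0:ℝ) c, h x ≤ 0) :
    ConcaveOn ℝ (Set.Icc 0 c) f := by
  have hdg : deriv f = g := funext fun x => (hfg x).deriv
  apply concaveOn_of_deriv2_nonpos hD
  · exact fun x _ => (hfg x).continuousAt.continuousWithinAt
  · exact fun x _ => ((hfg x).differentiableAt).differentiableWithinAt
  · rw [hdg]
    exact fun x _ => ((hgh x).differentiableAt).differentiableWithinAt
  · intro x hx
    have : deriv^[2] f x = h x := by
      simp only [Function.iterate_succ, Function.iterate_zero, Function.comp_apply, id_eq, hdg]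
      exact (hgh x).deriv
    rw [this]
    exact hnp x (interior_subset hx)

theorem stmt15 (a : ℝ) (ha : a ∈ Set.Icc 0 (Real.pi / 2)) :
    1 - Real.cos (a / 2) ≤ (1 - 1 / Real.sqrt 2) * Real.sin a ∧
    a * (a / 2 - Real.sin (a / 2)) ≤
      Real.pi / 2 * (Real.pi / 4 - 1 / Real.sqrt 2) * Real.sin a := by
  obtain ⟨ha0, ha2⟩ := ha
  have hpi : 0 < Real.pi / 2 := by positivity
  have hs2 : Real.sqrt 2 ^ 2 = 2 := Real.sq_sqrt (by norm_num)
  have hs2pos : 0 < Real.sqrt 2 := Real.sqrt_pos.2 (by norm_num)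
  have hs2lt : Real.sqrt 2 < 1.5 := by nlinarith
  have hs2gt : 1.4 < Real.sqrt 2 := by nlinarith
  have hinv : 1 / Real.sqrt 2 = Real.sqrt 2 / 2 := by
    rw [div_eq_div_iff hs2pos.ne' (by norm_num : (2:ℝ) ≠ 0)]
    nlinarith
  set c : ℝ := 1 - 1 / Real.sqrt 2 with hc
  set K : ℝ := Real.pi / 2 * (Real.pi / 4 - 1 / Real.sqrt 2) with hK
  have hcpos : 0 ≤ c := by
    rw [hc, hinv]; nlinarith
  have hKpos : 0 ≤ K := by
    rw [hK, hinv]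
    have := Real.pi_gt_three
    nlinarith
  -- derivatives of half-angle trig
  have hd_sinhalf : ∀ x : ℝ, HasDerivAt (fun y => Real.sin (y / 2)) (Real.cos (x / 2) / 2) x := by
    intro x
    have := (Real.hasDerivAt_sin (x / 2)).comp x ((hasDerivAt_id x).div_const 2)
    simpa [div_eq_mul_inv, mul_comm, Function.comp_def] using this
  have hd_coshalf : ∀ x : ℝ, HasDerivAt (fun y => Real.cos (y / 2)) (-(Real.sin (x / 2)) / 2) x := by
    intro x
    have := (Real.hasDerivAt_cos (x / 2)).comp x ((hasDerivAt_id x).div_const 2)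
    simpa [div_eq_mul_inv, mul_comm, Function.comp_def] using this
  constructor
  · -- Part 1
    set f : ℝ → ℝ := fun x => c * Real.sin x + Real.cos (x / 2) - 1 with hf
    have hfg : ∀ x, HasDerivAt f (c * Real.cos x + (-(Real.sin (x / 2)) / 2)) x := by
      intro x
      exact (((Real.hasDerivAt_sin x).const_mul c).add (hd_coshalf x)).sub_const 1
    have hgh : ∀ x, HasDerivAt (fun x => c * Real.cos x + (-(Real.sin (x / 2)) / 2))
        (c * (-(Real.sin x)) + (-(Real.cos (x / 2) / 2)) / 2) x := by
      intro x
      exact ((Real.hasDerivAt_cos x).const_mul c).add ((hd_sinhalf x).neg.div_const 2)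
    have hconc : ConcaveOn ℝ (Set.Icc 0 (Real.pi / 2)) f := by
      apply deriv2_aux (Real.pi / 2) f _ _ hfg hgh (convex_Icc _ _)
      intro x ⟨hx0, hx1⟩
      have h1 : 0 ≤ Real.sin x := Real.sin_nonneg_of_nonneg_of_le_pi hx0 (by linarith [Real.pi_pos])
      have h2 : 0 ≤ Real.cos (x / 2) := Real.cos_nonneg_of_mem_Icc ⟨by linarith [Real.pi_pos], by linarith⟩
      nlinarith
    have h0 : f 0 = 0 := by simp [hf]
    have hb : f (Real.pi / 2) = 0 := by
      simp only [hf]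
      rw [Real.sin_pi_div_two, show Real.pi / 2 / 2 = Real.pi / 4 by ring, Real.cos_pi_div_four,
        hc, hinv]
      ring
    have := concave_nonneg hpi hconc h0 hb a ⟨ha0, ha2⟩
    simp only [hf] at this
    linarith
  · -- Part 2
    set f : ℝ → ℝ := fun x => K * Real.sin x - (x ^ 2 / 2 - x * Real.sin (x / 2)) with hf
    have hfg : ∀ x, HasDerivAt f
        (K * Real.cos x - (x - (1 * Real.sin (x / 2) + x * (Real.cos (x / 2) / 2)))) x := by
      intro x
      have hx2 : HasDerivAt (fun y : ℝ => y ^ 2 / 2) x x := by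
        simpa using (hasDerivAt_pow 2 x).div_const 2
      have hprod : HasDerivAt (fun y : ℝ => y * Real.sin (y / 2))
          (1 * Real.sin (x / 2) + x * (Real.cos (x / 2) / 2)) x :=
        (hasDerivAt_id x).mul (hd_sinhalf x)
      exact ((Real.hasDerivAt_sin x).const_mul K).sub (hx2.sub hprod)
    have hgh : ∀ x, HasDerivAt
        (fun x => K * Real.cos x - (x - (1 * Real.sin (x / 2) + x * (Real.cos (x / 2) / 2))))
        (K * (-(Real.sin x)) - (1 - (1 * (Real.cos (x / 2) / 2) +
          (1 * (Real.cos (x / 2) / 2) + x * (-(Real.sin (x / 2)) / 2 / 2))))) x := by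
      intro x
      have h1 : HasDerivAt (fun y : ℝ => 1 * Real.sin (y / 2)) (1 * (Real.cos (x / 2) / 2)) x :=
        (hd_sinhalf x).const_mul 1
      have h2 : HasDerivAt (fun y : ℝ => y * (Real.cos (y / 2) / 2))
          (1 * (Real.cos (x / 2) / 2) + x * (-(Real.sin (x / 2)) / 2 / 2)) x :=
        (hasDerivAt_id x).mul ((hd_coshalf x).div_const 2)
      exact ((Real.hasDerivAt_cos x).const_mul K).sub ((hasDerivAt_id x).sub (h1.add h2))
    have hconc : ConcaveOn ℝ (Set.Icc 0 (Real.pi / 2)) f := by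
      apply deriv2_aux (Real.pi / 2) f _ _ hfg hgh (convex_Icc _ _)
      intro x ⟨hx0, hx1⟩
      have h1 : 0 ≤ Real.sin x := Real.sin_nonneg_of_nonneg_of_le_pi hx0 (by linarith [Real.pi_pos])
      have h2 : 0 ≤ Real.sin (x / 2) :=
        Real.sin_nonneg_of_nonneg_of_le_pi (by linarith) (by linarith [Real.pi_pos])
      have h3 : Real.cos (x / 2) ≤ 1 := Real.cos_le_one _
      nlinarith
    have h0 : f 0 = 0 := by simp [hf]
    have hb : f (Real.pi / 2) = 0 := by
      simp only [hf]
      rw [Real.sin_pi_div_two, show Real.pi / 2 / 2 = Real.pi / 4 by ring, Real.sin_pi_div_four,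
        hK, hinv]
      ring
    have := concave_nonneg hpi hconc h0 hb a ⟨ha0, ha2⟩
    simp only [hf] at this
    nlinarith
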